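/- If the row-stochastic matrix P is symmetric and X ∈ ℝ^{N×N} is symmetric positive semi-definite, then Tr(Φ(X)) ≤ Tr(X). -/

import Mathlib

open Matrix BigOperators

/-- The linear map `Φ(X) = P_q X P_qᵀ + q²(Ψ⁻(P·Ψ(X)) − Ψ⁻(Ψ(P X Pᵀ)))`,
where `P_q = (1−q)I + qP`. -/
noncomputable def Phi {N : ℕ} (P : Matrix (Fin N) (Fin N) ℝ) (q : ℝ)
    (X : Matrix (Fin N) (Fin N) ℝ) : Matrix (Fin N) (Fin N) ℝ :=
  ((1 - q) • (1 : Matrix (Fin N) (Fin N) ℝ) + q • P) * X *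
      ((1 - q) • (1 : Matrix (Fin N) (Fin N) ℝ) + q • P)ᵀ
    + q ^ 2 •
        (Matrix.diagonal (P *ᵥ Matrix.diag X)
          - Matrix.diagonal (Matrix.diag (P * X * Pᵀ)))

/-- Off-diagonal entries of a PSD real matrix are bounded by the average of the
corresponding diagonal entries. -/
lemma psd_entry {N : ℕ} {X : Matrix (Fin N) (Fin N) ℝ} (hX : X.PosSemidef) (i j : Fin N) :
    X i j ≤ (X i i + X j j)/2 := by
  have h := hX.dotProduct_mulVec_nonneg (Pi.single i 1 - Pi.single j 1)
  have hji : X j i = X i j := by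
    have := congrFun (congrFun hX.1 i) j
    simpa using this
  simp [dotProduct, mulVec, sub_mul, mul_sub, Pi.single_apply, Finset.sum_sub_distrib,
    ite_mul, mul_ite, Finset.sum_ite_eq, Finset.sum_ite_eq'] at h
  linarith

/-- If `P` is symmetric and `X` is positive semi-definite, then
`Tr(Φ(X)) ≤ Tr(X)`. -/
theorem stmt6 (N : ℕ) (hN : 1 ≤ N) (P : Matrix (Fin N) (Fin N) ℝ)
    (hPnonneg : ∀ i j, 0 ≤ P i j) (hProw : ∀ i, ∑ j, P i j = 1)
    (hPsymm : Pᵀ = P)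
    (q : ℝ) (hq0 : 0 ≤ q) (hq1 : q ≤ 1)
    (X : Matrix (Fin N) (Fin N) ℝ) (hX : X.PosSemidef) :
    (Phi P q X).trace ≤ X.trace := by
  have hcol : ∀ j, ∑ i, P i j = 1 := by
    intro j
    calc ∑ i, P i j = ∑ i, P j i := by
          refine Finset.sum_congr rfl fun i _ => ?_
          have := congrFun (congrFun hPsymm i) j
          simpa using this.symm
      _ = 1 := hProw j
  have hPX : (P * X).trace ≤ X.trace := by
    calc (P * X).trace = ∑ i, ∑ j, P i j * X j i := by
          simp [trace, mul_apply, diag]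
      _ ≤ ∑ i, ∑ j, P i j * ((X j j + X i i)/2) := by
          refine Finset.sum_le_sum fun i _ => Finset.sum_le_sum fun j _ => ?_
          exact mul_le_mul_of_nonneg_left (psd_entry hX j i) (hPnonneg i j)
      _ = X.trace := by
          have h1 : ∑ i, ∑ j, P i j * X j j = X.trace := by
            rw [Finset.sum_comm]
            simp only [← Finset.sum_mul, hcol, one_mul]
            simp [trace, diag]
          have h2 : ∑ i, ∑ j, P i j * X i i = X.trace := by
            simp only [← Finset.sum_mul, hProw, one_mul]
            simp [trace, diag]
          have hsplit : ∀ i j, P i j * ((X j j + X i i)/2)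
              = P i j * X j j / 2 + P i j * X i i / 2 := by intro i j; ring
          simp only [hsplit, Finset.sum_add_distrib, ← Finset.sum_div]
          rw [h1, h2]; ring
  have hdsum : ∑ i, (P *ᵥ X.diag) i = X.trace := by
    have h1 : ∑ j, ∑ i, P i j * X j j = X.trace := by
      simp only [← Finset.sum_mul, hcol, one_mul]
      simp [trace, diag]
    simp only [mulVec, dotProduct, diag]
    rw [Finset.sum_comm]
    exact h1
  have hexpand : ((1 - q) • (1 : Matrix (Fin N) (Fin N) ℝ) + q • P) * X *
      ((1 - q) • (1 : Matrix (Fin N) (Fin N) ℝ) + q • P)ᵀ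
      = ((1-q)^2) • X + (q*(1-q)) • (P*X) + (q*(1-q)) • (X*P) + (q^2) • (P*X*Pᵀ) := by
    simp only [transpose_add, transpose_smul, transpose_one, hPsymm]
    simp only [add_mul, mul_add, smul_mul_assoc, mul_smul_comm, one_mul, mul_one, smul_smul]
    module
  have hTr : (Phi P q X).trace
      = (1-q)^2 * X.trace + 2*(q*(1-q)) * (P*X).trace + q^2 * X.trace := by
    rw [Phi, hexpand]
    simp only [trace_add, trace_smul, trace_sub, trace_diagonal, smul_eq_mul]
    rw [trace_mul_comm X P]
    rw [hdsum]
    have h3 : ∑ i, (P * X * Pᵀ).diag i = (P * X * Pᵀ).trace := rfl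
    rw [h3, hPsymm]
    ring
  rw [hTr]
  nlinarith [mul_le_mul_of_nonneg_left hPX (mul_nonneg hq0 (by linarith : (0:ℝ) ≤ 1 - q)),
    sq_nonneg q, sq_nonneg (1-q)]
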